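/- For a three-qubit pure state |ψ⟩ = α₀|000⟩ + α₁e^{iθ}|100⟩ + α₂|101⟩ + α₃|110⟩ + α₄|111⟩ with α₀,…,α₄ ≥ 0, Σᵢ αᵢ² = 1 and θ ∈ [0,π], the average teleportation fidelities f(ρ_ij) = (τ_ij + 2)/3 of the two-qubit reduced states and the steering observables maintain the same ordering: f(ρ₁₂) > f(ρ₁₃) > f(ρ₂₃) if and only if S₁₂² > S₁₃² > S₂₃² (equivalently S₁₂ > S₁₃ > S₂₃), and likewise each pairwise inequality τ_ij > τ_ik holds if and only if S_ij² > S_ik². -/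
import Mathlib


/-- Squared steering observable S₁₂² of the reduced state ρ₁₂ of the three-qubit
pure state α₀|000⟩ + α₁e^{iθ}|100⟩ + α₂|101⟩ + α₃|110⟩ + α₄|111⟩. -/
noncomputable def S12sq (a0 a1 a2 a3 a4 θ : ℝ) : ℝ :=
  1 + 8 * a0 ^ 2 * a3 ^ 2 - 4 * a0 ^ 2 * a2 ^ 2 - 4 * a1 ^ 2 * a4 ^ 2
    - 4 * a2 ^ 2 * a3 ^ 2 + 8 * a1 * a2 * a3 * a4 * Real.cos θ

/-- Squared steering observable S₁₃² of the reduced state ρ₁₃. -/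
noncomputable def S13sq (a0 a1 a2 a3 a4 θ : ℝ) : ℝ :=
  1 + 8 * a0 ^ 2 * a2 ^ 2 - 4 * a0 ^ 2 * a3 ^ 2 - 4 * a1 ^ 2 * a4 ^ 2
    - 4 * a2 ^ 2 * a3 ^ 2 + 8 * a1 * a2 * a3 * a4 * Real.cos θ

/-- Squared steering observable S₂₃² of the reduced state ρ₂₃. -/
noncomputable def S23sq (a0 a1 a2 a3 a4 θ : ℝ) : ℝ :=
  1 - 4 * a0 ^ 2 * a2 ^ 2 - 4 * a0 ^ 2 * a3 ^ 2 + 8 * a1 ^ 2 * a4 ^ 2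
    + 8 * a2 ^ 2 * a3 ^ 2 - 16 * a1 * a2 * a3 * a4 * Real.cos θ

/-- Partial tangle τ₁₂ = 2α₀√(α₃²+α₄²). -/
noncomputable def tau12 (a0 a1 a2 a3 a4 θ : ℝ) : ℝ :=
  2 * a0 * Real.sqrt (a3 ^ 2 + a4 ^ 2)

/-- Partial tangle τ₁₃ = 2α₀√(α₂²+α₄²). -/
noncomputable def tau13 (a0 a1 a2 a3 a4 θ : ℝ) : ℝ :=
  2 * a0 * Real.sqrt (a2 ^ 2 + a4 ^ 2)

/-- Partial tangle τ₂₃ = 2√(α₀²α₄²+α₁²α₄²+α₂²α₃²−2α₁α₂α₃α₄cosθ). -/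
noncomputable def tau23 (a0 a1 a2 a3 a4 θ : ℝ) : ℝ :=
  2 * Real.sqrt (a0 ^ 2 * a4 ^ 2 + a1 ^ 2 * a4 ^ 2 + a2 ^ 2 * a3 ^ 2
    - 2 * a1 * a2 * a3 * a4 * Real.cos θ)

/-- Average teleportation fidelity f(ρ₁₂), determined by τ₁₂ = 3f(ρ₁₂) − 2. -/
noncomputable def fid12 (a0 a1 a2 a3 a4 θ : ℝ) : ℝ := (tau12 a0 a1 a2 a3 a4 θ + 2) / 3

/-- Average teleportation fidelity f(ρ₁₃), determined by τ₁₃ = 3f(ρ₁₃) − 2. -/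
noncomputable def fid13 (a0 a1 a2 a3 a4 θ : ℝ) : ℝ := (tau13 a0 a1 a2 a3 a4 θ + 2) / 3

/-- Average teleportation fidelity f(ρ₂₃), determined by τ₂₃ = 3f(ρ₂₃) − 2. -/
noncomputable def fid23 (a0 a1 a2 a3 a4 θ : ℝ) : ℝ := (tau23 a0 a1 a2 a3 a4 θ + 2) / 3

lemma fid_iff_aux (x y sx sy : ℝ) (hx : 0 ≤ x) (hy : 0 ≤ y)
    (hxy : x ^ 2 - y ^ 2 = (sx - sy) / 3) :
    ((x + 2) / 3 > (y + 2) / 3 ↔ sx > sy) := by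
  constructor
  · intro h
    have hxy' : y < x := by linarith
    nlinarith
  · intro h
    have : y ^ 2 < x ^ 2 := by linarith
    nlinarith

/-- For a three-qubit pure state α₀|000⟩ + α₁e^{iθ}|100⟩ + α₂|101⟩ + α₃|110⟩ + α₄|111⟩,
the average teleportation fidelities f(ρᵢⱼ) = (τᵢⱼ + 2)/3 of the reduced states and
the steering observables maintain the same ordering: each pairwise inequality
f(ρᵢⱼ) > f(ρᵢₖ) holds iff Sᵢⱼ² > Sᵢₖ², and f(ρ₁₂) > f(ρ₁₃) > f(ρ₂₃) iff
S₁₂ > S₁₃ > S₂₃ (with Sᵢⱼ = √(Sᵢⱼ²)). -/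
theorem stmt13 (a0 a1 a2 a3 a4 θ : ℝ)
    (h0 : 0 ≤ a0) (h1 : 0 ≤ a1) (h2 : 0 ≤ a2) (h3 : 0 ≤ a3) (h4 : 0 ≤ a4)
    (hsum : a0 ^ 2 + a1 ^ 2 + a2 ^ 2 + a3 ^ 2 + a4 ^ 2 = 1)
    (hθ : θ ∈ Set.Icc 0 Real.pi) :
    (fid12 a0 a1 a2 a3 a4 θ > fid13 a0 a1 a2 a3 a4 θ
        ↔ S12sq a0 a1 a2 a3 a4 θ > S13sq a0 a1 a2 a3 a4 θ) ∧
    (fid12 a0 a1 a2 a3 a4 θ > fid23 a0 a1 a2 a3 a4 θ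
        ↔ S12sq a0 a1 a2 a3 a4 θ > S23sq a0 a1 a2 a3 a4 θ) ∧
    (fid13 a0 a1 a2 a3 a4 θ > fid23 a0 a1 a2 a3 a4 θ
        ↔ S13sq a0 a1 a2 a3 a4 θ > S23sq a0 a1 a2 a3 a4 θ) ∧
    ((fid12 a0 a1 a2 a3 a4 θ > fid13 a0 a1 a2 a3 a4 θ ∧
        fid13 a0 a1 a2 a3 a4 θ > fid23 a0 a1 a2 a3 a4 θ)
      ↔ (Real.sqrt (S12sq a0 a1 a2 a3 a4 θ) > Real.sqrt (S13sq a0 a1 a2 a3 a4 θ) ∧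
        Real.sqrt (S13sq a0 a1 a2 a3 a4 θ) > Real.sqrt (S23sq a0 a1 a2 a3 a4 θ))) := by
  obtain ⟨hθ0, hθπ⟩ := hθ
  have hc1 : Real.cos θ ≤ 1 := Real.cos_le_one θ
  have hcm : -1 ≤ Real.cos θ := Real.neg_one_le_cos θ
  have hp : 0 ≤ a1 * a2 * a3 * a4 :=
    mul_nonneg (mul_nonneg (mul_nonneg h1 h2) h3) h4
  -- squares of the partial tangles
  have e12 : (tau12 a0 a1 a2 a3 a4 θ) ^ 2 = 4 * a0 ^ 2 * (a3 ^ 2 + a4 ^ 2) := by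
    simp only [tau12, mul_pow]
    rw [Real.sq_sqrt (by positivity)]; ring
  have e13 : (tau13 a0 a1 a2 a3 a4 θ) ^ 2 = 4 * a0 ^ 2 * (a2 ^ 2 + a4 ^ 2) := by
    simp only [tau13, mul_pow]
    rw [Real.sq_sqrt (by positivity)]; ring
  have harg23 : 0 ≤ a0 ^ 2 * a4 ^ 2 + a1 ^ 2 * a4 ^ 2 + a2 ^ 2 * a3 ^ 2
      - 2 * a1 * a2 * a3 * a4 * Real.cos θ := by
    nlinarith [sq_nonneg (a1 * a4 - a2 * a3), sq_nonneg (a0 * a4),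
      mul_nonneg hp (by linarith : (0:ℝ) ≤ 1 - Real.cos θ)]
  have e23 : (tau23 a0 a1 a2 a3 a4 θ) ^ 2 = 4 * (a0 ^ 2 * a4 ^ 2 + a1 ^ 2 * a4 ^ 2
      + a2 ^ 2 * a3 ^ 2 - 2 * a1 * a2 * a3 * a4 * Real.cos θ) := by
    simp only [tau23, mul_pow]
    rw [Real.sq_sqrt harg23]; ring
  have ht12 : 0 ≤ tau12 a0 a1 a2 a3 a4 θ :=
    mul_nonneg (by linarith) (Real.sqrt_nonneg _)
  have ht13 : 0 ≤ tau13 a0 a1 a2 a3 a4 θ :=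
    mul_nonneg (by linarith) (Real.sqrt_nonneg _)
  have ht23 : 0 ≤ tau23 a0 a1 a2 a3 a4 θ :=
    mul_nonneg (by norm_num) (Real.sqrt_nonneg _)
  have d1 : (tau12 a0 a1 a2 a3 a4 θ) ^ 2 - (tau13 a0 a1 a2 a3 a4 θ) ^ 2
      = (S12sq a0 a1 a2 a3 a4 θ - S13sq a0 a1 a2 a3 a4 θ) / 3 := by
    rw [e12, e13]; simp only [S12sq, S13sq]; ring
  have d2 : (tau12 a0 a1 a2 a3 a4 θ) ^ 2 - (tau23 a0 a1 a2 a3 a4 θ) ^ 2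
      = (S12sq a0 a1 a2 a3 a4 θ - S23sq a0 a1 a2 a3 a4 θ) / 3 := by
    rw [e12, e23]; simp only [S12sq, S23sq]; ring
  have d3 : (tau13 a0 a1 a2 a3 a4 θ) ^ 2 - (tau23 a0 a1 a2 a3 a4 θ) ^ 2
      = (S13sq a0 a1 a2 a3 a4 θ - S23sq a0 a1 a2 a3 a4 θ) / 3 := by
    rw [e13, e23]; simp only [S13sq, S23sq]; ring
  have i1 := fid_iff_aux _ _ _ _ ht12 ht13 d1
  have i2 := fid_iff_aux _ _ _ _ ht12 ht23 d2
  have i3 := fid_iff_aux _ _ _ _ ht13 ht23 d3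
  simp only [fid12, fid13, fid23]
  refine ⟨i1, i2, i3, ?_⟩
  have hS13n : 0 ≤ S13sq a0 a1 a2 a3 a4 θ := by
    have key : S13sq a0 a1 a2 a3 a4 θ
        = (a0 ^ 2 + a1 ^ 2 + a2 ^ 2 - a3 ^ 2 - a4 ^ 2) ^ 2 + 4 * (a0 * a4) ^ 2
          + 8 * (a0 * a2) ^ 2 + 4 * (a1 * a3 - a2 * a4) ^ 2
          + 8 * (a1 * a2 * a3 * a4) * (1 + Real.cos θ)
          + (1 - (a0 ^ 2 + a1 ^ 2 + a2 ^ 2 + a3 ^ 2 + a4 ^ 2) ^ 2) := by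
      simp only [S13sq]; ring
    rw [hsum] at key
    norm_num at key
    rw [key]
    have h' := mul_nonneg hp (by linarith : (0:ℝ) ≤ 1 + Real.cos θ)
    linarith [sq_nonneg (a0 ^ 2 + a1 ^ 2 + a2 ^ 2 - a3 ^ 2 - a4 ^ 2),
      sq_nonneg (a0 * a4), sq_nonneg (a0 * a2), sq_nonneg (a1 * a3 - a2 * a4)]
  have hS23n : 0 ≤ S23sq a0 a1 a2 a3 a4 θ := by
    have key : S23sq a0 a1 a2 a3 a4 θ
        = (a0 ^ 2 - a1 ^ 2 - a2 ^ 2 - a3 ^ 2 - a4 ^ 2) ^ 2 + 4 * (a0 * a1) ^ 2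
          + 4 * (a0 * a4) ^ 2 + 8 * (a1 * a4 - a2 * a3) ^ 2
          + 16 * (a1 * a2 * a3 * a4) * (1 - Real.cos θ)
          + (1 - (a0 ^ 2 + a1 ^ 2 + a2 ^ 2 + a3 ^ 2 + a4 ^ 2) ^ 2) := by
      simp only [S23sq]; ring
    rw [hsum] at key
    norm_num at key
    rw [key]
    have h' := mul_nonneg hp (by linarith : (0:ℝ) ≤ 1 - Real.cos θ)
    linarith [sq_nonneg (a0 ^ 2 - a1 ^ 2 - a2 ^ 2 - a3 ^ 2 - a4 ^ 2),
      sq_nonneg (a0 * a1), sq_nonneg (a0 * a4), sq_nonneg (a1 * a4 - a2 * a3)]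
  rw [i1, i3]
  constructor
  · rintro ⟨ha, hb⟩
    exact ⟨Real.sqrt_lt_sqrt hS13n ha, Real.sqrt_lt_sqrt hS23n hb⟩
  · rintro ⟨ha, hb⟩
    exact ⟨(Real.sqrt_lt_sqrt_iff hS13n).mp ha, (Real.sqrt_lt_sqrt_iff hS23n).mp hb⟩
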